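/- Let (S(t))_{t≥0} be a family of maps S(t) : ℝ^d → ℝ^d such that S(0) = id, S(s+t) = S(s)∘S(t), each S(t) is monotone (u ≤ v implies S(t)u ≤ S(t)v) and preserves constants (S(t)(α·1) = α·1), each S(t) is convex, and the limit Qu := lim_{h↓0} (S(h)u − u)/h exists for all u ∈ ℝ^d. Then Q is convex, Q(α·1) = 0 for all α ∈ ℝ, and Q satisfies the positive maximum principle: if u_i ≥ u_j for all j, then (Qu)_i ≤ 0. -/

import Mathlib

open Filter Topology

/-- The generator of a uniformly continuous convex Markovian semigroup is convex,
vanishes on constants, and satisfies the positive maximum principle. -/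
theorem generator_of_convex_markov_semigroup {d : ℕ} (hd : 0 < d)
    (S : ℝ → (Fin d → ℝ) → (Fin d → ℝ))
    (Q : (Fin d → ℝ) → (Fin d → ℝ))
    (hid : S 0 = id)
    (hsg : ∀ s t : ℝ, 0 ≤ s → 0 ≤ t → S (s + t) = S s ∘ S t)
    (hmono : ∀ t : ℝ, 0 ≤ t → ∀ u v : Fin d → ℝ, u ≤ v → S t u ≤ S t v)
    (hconst : ∀ t : ℝ, 0 ≤ t → ∀ α : ℝ, S t (fun _ => α) = fun _ => α)
    (hconv : ∀ t : ℝ, 0 ≤ t → ∀ i, ConvexOn ℝ Set.univ (fun u => S t u i))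
    (hder : ∀ u : Fin d → ℝ,
      Tendsto (fun h : ℝ => h⁻¹ • (S h u - u)) (𝓝[>] 0) (𝓝 (Q u))) :
    (∀ i, ConvexOn ℝ Set.univ (fun u => Q u i)) ∧
    (∀ α : ℝ, Q (fun _ => α) = 0) ∧
    (∀ (u : Fin d → ℝ) (i : Fin d), (∀ j, u j ≤ u i) → Q u i ≤ 0) := by
  have hderi : ∀ (u : Fin d → ℝ) (i : Fin d),
      Tendsto (fun h : ℝ => h⁻¹ * (S h u i - u i)) (𝓝[>] 0) (𝓝 (Q u i)) := by
    intro u i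
    have := ((continuous_apply i).continuousAt (x := Q u)).tendsto.comp (hder u)
    simpa [Function.comp_def, smul_eq_mul] using this
  refine ⟨?_, ?_, ?_⟩
  · intro i
    refine ⟨convex_univ, ?_⟩
    intro x _ y _ a b ha hb hab
    have hle : ∀ h : ℝ, h ∈ Set.Ioi (0:ℝ) →
        h⁻¹ * (S h (a • x + b • y) i - (a • x + b • y) i)
          ≤ a * (h⁻¹ * (S h x i - x i)) + b * (h⁻¹ * (S h y i - y i)) := by
      intro h hh
      have hh0 : (0:ℝ) < h := hh
      have hc := (hconv h hh0.le i).2 (Set.mem_univ x) (Set.mem_univ y) ha hb hab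
      simp only [smul_eq_mul] at hc
      have hx : (a • x + b • y) i = a * x i + b * y i := by
        simp [smul_eq_mul]
      have : S h (a • x + b • y) i - (a • x + b • y) i
          ≤ a * (S h x i - x i) + b * (S h y i - y i) := by
        rw [hx]; nlinarith [hc]
      have hinv : (0:ℝ) ≤ h⁻¹ := by positivity
      nlinarith [mul_le_mul_of_nonneg_left this hinv]
    exact le_of_tendsto_of_tendsto (hderi (a • x + b • y) i)
      (((hderi x i).const_mul a).add ((hderi y i).const_mul b))
      (eventually_nhdsWithin_of_forall hle)
  · intro α
    have h0 : Tendsto (fun h : ℝ => h⁻¹ • (S h (fun _ => α) - (fun _ => α)))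
        (𝓝[>] 0) (𝓝 (0 : Fin d → ℝ)) := by
      have : ∀ᶠ h : ℝ in 𝓝[>] 0,
          h⁻¹ • (S h (fun _ => α) - (fun _ => α)) = (0 : Fin d → ℝ) := by
        filter_upwards [self_mem_nhdsWithin] with h hh
        have : S h (fun _ => α) = fun _ => α := hconst h (le_of_lt hh) α
        simp [this]
      exact Tendsto.congr' (this.mono fun _ hh => hh.symm) tendsto_const_nhds
    exact tendsto_nhds_unique (hder _) h0
  · intro u i hmax
    refine le_of_tendsto (hderi u i) ?_
    filter_upwards [self_mem_nhdsWithin] with h hh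
    have hh0 : (0:ℝ) < h := hh
    have hle : S h u ≤ S h (fun _ => u i) := hmono h hh0.le u _ (fun j => hmax j)
    have : S h u i ≤ u i := by
      have := hle i
      rwa [hconst h hh0.le (u i)] at this
    have hinv : (0:ℝ) ≤ h⁻¹ := by positivity
    nlinarith
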